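/- Connection with the Wigner–Yanase metric (Proposition 5.2, finite-dimensional form): let ρ be a positive definite density matrix of size n and R a Hermitian n×n complex matrix. Then there is a unique matrix Y satisfying √ρ * Y + Y * √ρ = Complex.I • (R * ρ − ρ * R), namely Y = Complex.I • (R * √ρ − √ρ * R); this Y is Hermitian, and Tr(Y * Y) = 2 * Tr(ρ * R * R) − 2 * Tr(√ρ * R * √ρ * R). -/

import Mathlib

open Matrix
open scoped ComplexOrder

noncomputable section

/-- A density matrix: positive semidefinite with trace 1. -/
def IsDensity {ι : Type*} [Fintype ι] (ρ : Matrix ι ι ℂ) : Prop :=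
  ρ.PosSemidef ∧ ρ.trace = 1

/-- A coupling between the quantum states `ρ` and `σ`. -/
def IsCoupling {ι : Type*} [Fintype ι] (ρ σ : Matrix ι ι ℂ)
    (P : Matrix (ι × ι) (ι × ι) ℂ) : Prop :=
  P.PosSemidef ∧ P.trace = 1 ∧
  (∀ j l, ∑ i, P (i, j) (i, l) = ρ l j) ∧
  (∀ i k, ∑ j, P (i, j) (k, j) = σ i k)

/-- The cost operator `C = ∑ s, (Rₛ ⊗ I − I ⊗ Rₛᵀ)²` associated to a family of
Hermitian matrices. -/
def costOp {ι : Type*} [Fintype ι] [DecidableEq ι] {κ : Type*} [Fintype κ]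
    (R : κ → Matrix ι ι ℂ) : Matrix (ι × ι) (ι × ι) ℂ :=
  ∑ s, (Matrix.of (fun p q : ι × ι =>
      R s p.1 q.1 * (if p.2 = q.2 then 1 else 0)
      - (if p.1 = q.1 then 1 else 0) * R s q.2 p.2)) ^ 2

/-- The positive semidefinite square root of a positive semidefinite matrix
(the definition `Matrix.PosSemidef.sqrt` of the older Mathlib, removed since). -/
noncomputable def Matrix.PosSemidef.sqrt {n : Type*} [Fintype n] [DecidableEq n]
    {𝕜 : Type*} [RCLike 𝕜] {A : Matrix n n 𝕜} (hA : A.PosSemidef) : Matrix n n 𝕜 :=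
  hA.1.eigenvectorUnitary.1 * diagonal ((↑) ∘ (√·) ∘ hA.1.eigenvalues) *
  (star hA.1.eigenvectorUnitary : Matrix n n 𝕜)

lemma Matrix.PosSemidef.posSemidef_sqrt {n : Type*} [Fintype n] [DecidableEq n]
    {𝕜 : Type*} [RCLike 𝕜] {A : Matrix n n 𝕜} (hA : A.PosSemidef) : hA.sqrt.PosSemidef := by
  have hD : (diagonal ((↑) ∘ (√·) ∘ hA.1.eigenvalues : n → 𝕜)).PosSemidef := by
    rw [posSemidef_diagonal_iff]
    intro i
    simp only [Function.comp_apply, RCLike.ofReal_nonneg]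
    exact Real.sqrt_nonneg _
  exact hD.mul_mul_conjTranspose_same hA.1.eigenvectorUnitary.1

lemma Matrix.PosSemidef.sqrt_mul_self {n : Type*} [Fintype n] [DecidableEq n]
    {𝕜 : Type*} [RCLike 𝕜] {A : Matrix n n 𝕜} (hA : A.PosSemidef) : hA.sqrt * hA.sqrt = A := by
  have hU : (star hA.1.eigenvectorUnitary : Matrix n n 𝕜) * hA.1.eigenvectorUnitary.1 = 1 :=
    Matrix.mem_unitaryGroup_iff'.mp hA.1.eigenvectorUnitary.2
  have hDD : diagonal ((↑) ∘ (√·) ∘ hA.1.eigenvalues : n → 𝕜) *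
      diagonal ((↑) ∘ (√·) ∘ hA.1.eigenvalues : n → 𝕜)
      = diagonal (RCLike.ofReal ∘ hA.1.eigenvalues) := by
    rw [diagonal_mul_diagonal]
    congr 1
    funext i
    simp only [Function.comp_apply]
    rw [← RCLike.ofReal_mul, Real.mul_self_sqrt (hA.eigenvalues_nonneg i)]
  unfold Matrix.PosSemidef.sqrt
  conv_rhs => rw [hA.1.spectral_theorem]
  rw [Unitary.conjStarAlgAut_apply]
  calc _ = hA.1.eigenvectorUnitary.1 * diagonal ((↑) ∘ (√·) ∘ hA.1.eigenvalues) *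
        ((star hA.1.eigenvectorUnitary : Matrix n n 𝕜) * hA.1.eigenvectorUnitary.1) *
        diagonal ((↑) ∘ (√·) ∘ hA.1.eigenvalues) *
        (star hA.1.eigenvectorUnitary : Matrix n n 𝕜) := by simp only [Matrix.mul_assoc]
    _ = _ := by rw [hU, Matrix.mul_one, Matrix.mul_assoc _ (diagonal _) (diagonal _), hDD]


lemma myDiag_nonneg {m : Type*} [Fintype m] [DecidableEq m] {M : Matrix m m ℂ}
    (h : M.PosSemidef) (i : m) : 0 ≤ M i i := by
  exact h.diag_nonneg

lemma myTrace_nonneg {n : ℕ} {M : Matrix (Fin n) (Fin n) ℂ} (h : M.PosSemidef) :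
    0 ≤ M.trace :=
  Finset.sum_nonneg fun i _ => myDiag_nonneg h i

lemma myTrace_mul_nonneg {n : ℕ} {M N : Matrix (Fin n) (Fin n) ℂ}
    (hM : M.PosSemidef) (hN : N.PosSemidef) : 0 ≤ (M * N).trace := by
  have hss := hM.sqrt_mul_self
  have hsH : hM.sqrtᴴ = hM.sqrt := hM.posSemidef_sqrt.1
  have e : (M * N).trace = (hM.sqrt * N * hM.sqrt).trace := by
    conv_lhs => rw [← hss]
    rw [Matrix.mul_assoc, trace_mul_comm, Matrix.mul_assoc]
  rw [e]
  have := hN.mul_mul_conjTranspose_same hM.sqrt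
  rw [hsH] at this
  exact myTrace_nonneg this

lemma myEq_zero_of_trace {m n : ℕ} {M : Matrix (Fin m) (Fin n) ℂ}
    (h : (Mᴴ * M).trace = 0) : M = 0 := by
  have hz : ∀ j ∈ (Finset.univ : Finset (Fin n)), (Mᴴ * M) j j = 0 :=
    (Finset.sum_eq_zero_iff_of_nonneg
      (fun j _ => myDiag_nonneg (posSemidef_conjTranspose_mul_self M) j)).mp h
  refine Matrix.ext fun i j => ?_
  have hcol : (Mᴴ * M) j j = dotProduct (star fun k => M k j) (fun k => M k j) := by
    simp [Matrix.mul_apply, dotProduct, conjTranspose_apply]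
  have := dotProduct_star_self_eq_zero.mp (hcol.symm.trans (hz j (Finset.mem_univ j)))
  simpa using congr_fun this i

lemma mySylvester {n : ℕ} {s W : Matrix (Fin n) (Fin n) ℂ}
    (hs : s.PosSemidef) (hsu : IsUnit s) (h : s * W + W * s = 0) : W = 0 := by
  classical
  have hWW : (Wᴴ * W).PosSemidef := posSemidef_conjTranspose_mul_self W
  have ht : (Wᴴ * (s * W)).trace + ((Wᴴ * W) * s).trace = 0 := by
    have : Wᴴ * (s * W + W * s) = Wᴴ * (s * W) + (Wᴴ * W) * s := by
      rw [Matrix.mul_add, Matrix.mul_assoc]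
    rw [← trace_add, ← this, h, Matrix.mul_zero, trace_zero]
  set t1 := (Wᴴ * (s * W)).trace
  set t2 := ((Wᴴ * W) * s).trace
  have ht2 : 0 ≤ t2 := myTrace_mul_nonneg hWW hs
  -- t1 as trace of (√s W)ᴴ (√s W)
  have hss := hs.sqrt_mul_self
  have hsH : hs.sqrtᴴ = hs.sqrt := hs.posSemidef_sqrt.1
  have e1 : t1 = ((hs.sqrt * W)ᴴ * (hs.sqrt * W)).trace := by
    show (Wᴴ * (s * W)).trace = _
    rw [conjTranspose_mul, hsH]
    conv_lhs => rw [← hss]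
    rw [Matrix.mul_assoc, Matrix.mul_assoc]
  have ht1 : 0 ≤ t1 := by
    rw [e1]; exact myTrace_nonneg (posSemidef_conjTranspose_mul_self _)
  have ht1' : t1 = 0 := by
    refine le_antisymm ?_ ht1
    rw [eq_neg_of_add_eq_zero_left ht]
    exact neg_nonpos_of_nonneg ht2
  have hzero : hs.sqrt * W = 0 := myEq_zero_of_trace (by rw [← e1, ht1'])
  have hdet : IsUnit hs.sqrt.det := by
    have : IsUnit s.det := (Matrix.isUnit_iff_isUnit_det s).mp hsu
    rw [← hss, Matrix.det_mul] at this
    exact isUnit_of_mul_isUnit_left this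
  calc W = (hs.sqrt⁻¹ * hs.sqrt) * W := by rw [Matrix.nonsing_inv_mul _ hdet, Matrix.one_mul]
    _ = hs.sqrt⁻¹ * (hs.sqrt * W) := by rw [Matrix.mul_assoc]
    _ = 0 := by rw [hzero, Matrix.mul_zero]

/-- **Connection with the Wigner–Yanase metric** (Proposition 5.2, finite-dimensional form):
the unique solution `Y` of `√ρ Y + Y √ρ = i (Rρ − ρR)` is `Y = i (R√ρ − √ρ R)`; it is
Hermitian and `Tr(Y²) = 2 Tr(ρ R R) − 2 Tr(√ρ R √ρ R)`. -/
theorem wigner_yanase_connection {n : ℕ}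
    (ρ : Matrix (Fin n) (Fin n) ℂ) (hρ : IsDensity ρ) (hρ_pd : IsUnit ρ)
    (R : Matrix (Fin n) (Fin n) ℂ) (hR : R.IsHermitian) :
    ∀ Y : Matrix (Fin n) (Fin n) ℂ,
      Y = Complex.I • (R * hρ.1.sqrt - hρ.1.sqrt * R) →
        (hρ.1.sqrt * Y + Y * hρ.1.sqrt = Complex.I • (R * ρ - ρ * R)) ∧
        (∀ Z : Matrix (Fin n) (Fin n) ℂ,
          hρ.1.sqrt * Z + Z * hρ.1.sqrt = Complex.I • (R * ρ - ρ * R) → Z = Y) ∧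
        Y.IsHermitian ∧
        Matrix.trace (Y * Y)
          = 2 * Matrix.trace (ρ * R * R) - 2 * Matrix.trace (hρ.1.sqrt * R * hρ.1.sqrt * R) := by
  intro Y hY
  set s := hρ.1.sqrt with hs_def
  have hsP : s.PosSemidef := hρ.1.posSemidef_sqrt
  have hss : s * s = ρ := hρ.1.sqrt_mul_self
  have hsH : sᴴ = s := hsP.1
  have hRH : Rᴴ = R := hR
  have hsu : IsUnit s := by
    rw [Matrix.isUnit_iff_isUnit_det] at hρ_pd ⊢
    rw [← hss, Matrix.det_mul] at hρ_pd
    exact isUnit_of_mul_isUnit_left hρ_pd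
  have h1 : s * Y + Y * s = Complex.I • (R * ρ - ρ * R) := by
    rw [hY, Matrix.mul_smul, Matrix.smul_mul, ← smul_add]
    congr 1
    rw [← hss]
    noncomm_ring
  refine ⟨h1, ?_, ?_, ?_⟩
  · intro Z hZ
    have hW : s * (Z - Y) + (Z - Y) * s = 0 := by
      rw [Matrix.mul_sub, Matrix.sub_mul]
      rw [sub_add_sub_comm, hZ, h1, sub_self]
    have := mySylvester hsP hsu hW
    rwa [sub_eq_zero] at this
  · show Yᴴ = Y
    rw [hY]
    rw [Matrix.conjTranspose_smul, Matrix.conjTranspose_sub, Matrix.conjTranspose_mul,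
      Matrix.conjTranspose_mul, hsH, hRH, Complex.star_def, Complex.conj_I, neg_smul,
      ← smul_neg, neg_sub]
  · have e : Y * Y = -((R * s - s * R) * (R * s - s * R)) := by
      rw [hY, Matrix.smul_mul, Matrix.mul_smul, smul_smul, Complex.I_mul_I, neg_one_smul]
    have e2 : (R * s - s * R) * (R * s - s * R)
        = R * s * R * s - R * ρ * R - s * R * R * s + s * R * s * R := by
      rw [← hss]; noncomm_ring
    have c1 : (R * s * R * s).trace = (s * R * s * R).trace := by
      rw [trace_mul_comm (R * s * R) s]; simp only [← Matrix.mul_assoc]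
    have c2 : (R * ρ * R).trace = (ρ * R * R).trace := by
      rw [Matrix.mul_assoc R ρ R, trace_mul_comm R (ρ * R)]
    have c3 : (s * R * R * s).trace = (ρ * R * R).trace := by
      rw [trace_mul_comm (s * R * R) s]; simp only [← Matrix.mul_assoc]; rw [hss]
    rw [e, trace_neg, e2, trace_add, trace_sub, trace_sub, c1, c2, c3]
    ring
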